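/- If L is accepted by a DFA with n states, then suff(L), the language of all suffixes of words of L, is accepted by a DFA with at most 2^n − 1 states. -/

import Mathlib

theorem suff_state_complexity {α σ : Type} [Fintype σ] (D : DFA α σ) :
    ∃ (τ : Type) (_ : Fintype τ) (D' : DFA α τ),
      D'.accepts = {v : List α | ∃ u, u ++ v ∈ D.accepts} ∧
      Fintype.card τ ≤ 2 ^ Fintype.card σ - 1 := by
  classical
  set P : Finset σ := Finset.univ.filter (fun q => ∃ u : List α, D.evalFrom D.start u = q)
    with hP
  have hPne : P.Nonempty := ⟨D.start, by simp [hP]; exact ⟨[], rfl⟩⟩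
  refine ⟨{S : Finset σ // S.Nonempty}, inferInstance,
    ⟨fun S a => ⟨S.1.image (fun q => D.step q a), S.2.image _⟩,
     ⟨P, hPne⟩,
     {S | ∃ q ∈ S.1, q ∈ D.accept}⟩, ?_, ?_⟩
  · set D' : DFA α {S : Finset σ // S.Nonempty} :=
      ⟨fun S a => ⟨S.1.image (fun q => D.step q a), S.2.image _⟩,
       ⟨P, hPne⟩, {S | ∃ q ∈ S.1, q ∈ D.accept}⟩ with hD'
    have key : ∀ (v : List α) (S : {S : Finset σ // S.Nonempty}),
        (D'.evalFrom S v).1 = S.1.image (fun q => D.evalFrom q v) := by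
      intro v
      induction v with
      | nil => intro S; simp [DFA.evalFrom]
      | cons a v ih =>
        intro S
        rw [show D'.evalFrom S (a :: v) = D'.evalFrom (D'.step S a) v from rfl, ih]
        ext q
        simp [hD', Finset.mem_image, DFA.evalFrom]
    ext v
    simp only [DFA.mem_accepts, Set.mem_setOf_eq]
    constructor
    · rintro hv
      have := hv
      rw [show D'.eval v = D'.evalFrom D'.start v from rfl] at this
      obtain ⟨q, hq, hqa⟩ := this
      rw [key] at hq
      obtain ⟨p, hp, rfl⟩ := Finset.mem_image.mp hq
      have : ∃ u : List α, D.evalFrom D.start u = p := by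
        simpa [hD', hP] using hp
      obtain ⟨u, rfl⟩ := this
      exact ⟨u, by simpa [DFA.mem_accepts, DFA.eval, DFA.evalFrom_of_append] using hqa⟩
    · rintro ⟨u, hu⟩
      rw [DFA.eval, DFA.evalFrom_of_append] at hu
      show ∃ q ∈ (D'.evalFrom D'.start v).1, q ∈ D.accept
      rw [key]
      exact ⟨_, Finset.mem_image.mpr ⟨D.evalFrom D.start u, by simp [hD', hP], rfl⟩, hu⟩
  · have h1 : Fintype.card {S : Finset σ // S.Nonempty}
        = Fintype.card {S : Finset σ // ¬ S = ∅} := by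
      apply Fintype.card_congr
      exact Equiv.subtypeEquivRight (by simp [Finset.nonempty_iff_ne_empty])
    rw [h1, Fintype.card_subtype_compl, Fintype.card_subtype_eq, Fintype.card_finset]
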